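/- Let N, c ∈ ℕ with N ≥ 2 and let S be a set of integers, each representable with m bits (i.e., 0 ≤ x < 2^m for all x ∈ S), with |S| ≤ m^c. Then there exists a constant c₀ depending only on c and a prime p with p ≤ m^{c₀} such that for all distinct x, y ∈ S, x ≢ y (mod p). -/

import Mathlib

open Finset

/-- A number below `2^m` has at most `m` prime factors. -/
lemma fks_omega_le {d m : ℕ} (hd : d < 2 ^ m) : d.primeFactors.card ≤ m := by
  rcases eq_or_ne d 0 with rfl | h0
  · simp
  have h1 : 2 ^ d.primeFactors.card ≤ ∏ p ∈ d.primeFactors, p := by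
    rw [← Finset.prod_const]
    exact Finset.prod_le_prod' fun p hp => (Nat.prime_of_mem_primeFactors hp).two_le
  have h2 : ∏ p ∈ d.primeFactors, p ≤ d :=
    Nat.le_of_dvd (Nat.pos_of_ne_zero h0) (Nat.prod_primeFactors_dvd d)
  exact le_of_lt ((Nat.pow_lt_pow_iff_right one_lt_two).mp (lt_of_le_of_lt (h1.trans h2) hd))

/-- Chebyshev-type lower bound on the number of primes, via the central binomial
coefficient. -/
lemma fks_cheb (n : ℕ) (hn : 4 ≤ n) :
    4 ^ n < (2 * n) ^ (((Finset.range (2 * n + 1)).filter Nat.Prime).card + 1) := by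
  have hcbne : Nat.centralBinom n ≠ 0 := (Nat.centralBinom_pos n).ne'
  have hself : ∏ p ∈ (Nat.centralBinom n).primeFactors,
      p ^ ((Nat.centralBinom n).factorization p) = Nat.centralBinom n := by
    rw [← Nat.support_factorization]
    exact Nat.factorization_prod_pow_eq_self hcbne
  have hfac : ∀ p ∈ (Nat.centralBinom n).primeFactors,
      p ^ ((Nat.centralBinom n).factorization p) ≤ 2 * n := by
    intro p _
    have : Nat.centralBinom n = (2 * n).choose n := rfl
    rw [this]
    exact Nat.pow_factorization_choose_le (by omega)
  have hcb_le : Nat.centralBinom n ≤ (2 * n) ^ (Nat.centralBinom n).primeFactors.card := by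
    calc Nat.centralBinom n
        = ∏ p ∈ (Nat.centralBinom n).primeFactors,
            p ^ ((Nat.centralBinom n).factorization p) := hself.symm
      _ ≤ ∏ _p ∈ (Nat.centralBinom n).primeFactors, (2 * n) :=
          Finset.prod_le_prod' hfac
      _ = (2 * n) ^ (Nat.centralBinom n).primeFactors.card := Finset.prod_const _
  have hsub : (Nat.centralBinom n).primeFactors ⊆
      (Finset.range (2 * n + 1)).filter Nat.Prime := by
    intro p hp
    obtain ⟨hpp, hpd, -⟩ := Nat.mem_primeFactors.mp hp
    have hν : 0 < (Nat.centralBinom n).factorization p :=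
      Nat.Prime.factorization_pos_of_dvd hpp hcbne hpd
    have hple : p ≤ 2 * n := by
      calc p ≤ p ^ ((Nat.centralBinom n).factorization p) :=
            Nat.le_self_pow hν.ne' p
        _ ≤ 2 * n := hfac p hp
    exact Finset.mem_filter.mpr ⟨Finset.mem_range.mpr (by omega), hpp⟩
  have hcard : (Nat.centralBinom n).primeFactors.card ≤
      ((Finset.range (2 * n + 1)).filter Nat.Prime).card := Finset.card_le_card hsub
  calc 4 ^ n < n * Nat.centralBinom n := Nat.four_pow_lt_mul_centralBinom n hn
    _ ≤ (2 * n) * (2 * n) ^ (Nat.centralBinom n).primeFactors.card :=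
        Nat.mul_le_mul (by omega) hcb_le
    _ = (2 * n) ^ ((Nat.centralBinom n).primeFactors.card + 1) := by ring
    _ ≤ (2 * n) ^ (((Finset.range (2 * n + 1)).filter Nat.Prime).card + 1) :=
        Nat.pow_le_pow_right (by omega) (by omega)

/-- Linear functions of `l` are eventually dominated by `2 ^ l`. -/
lemma fks_lin_le_pow (K : ℕ) : ∀ l, 4 * K + 4 ≤ l → K * (l + 1) ≤ 2 ^ l := by
  intro l hl
  induction l with
  | zero => omega
  | succ n ih =>
    rcases Nat.lt_or_ge n (4 * K + 4) with h | h
    · have hn1 : n + 1 = 4 * K + 4 := by omega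
      rw [hn1]
      have h1 : K ≤ 2 ^ K := (Nat.lt_two_pow_self (n := K)).le
      have h2 : 4 * K + 4 + 1 ≤ 16 * 2 ^ K := by
        have : K + 1 ≤ 2 ^ K := Nat.succ_le_of_lt (Nat.lt_two_pow_self (n := K))
        omega
      calc K * (4 * K + 4 + 1) ≤ 2 ^ K * (16 * 2 ^ K) := Nat.mul_le_mul h1 h2
        _ = 16 * 4 ^ K := by
            rw [show (4:ℕ) = 2^2 by norm_num, ← pow_mul]; ring
        _ ≤ 16 * 16 ^ K := by
            have := Nat.pow_le_pow_left (show 4 ≤ 16 by norm_num) K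
            omega
        _ = 2 ^ (4 * K + 4) := by
            rw [show (16 : ℕ) = 2 ^ 4 by norm_num, ← pow_mul, ← pow_add]
            ring_nf
    · have hK : K ≤ 2 ^ n := by
        have h1 : n < 2 ^ n := Nat.lt_two_pow_self (n := n)
        omega
      have := ih h
      calc K * (n + 1 + 1) = K * (n + 1) + K := by ring
        _ ≤ 2 ^ n + 2 ^ n := Nat.add_le_add this hK
        _ = 2 ^ (n + 1) := by ring

/-- The Fredman–Komlós–Szemerédi prime isolation lemma: for every `c` there is
a `c₀` such that for all sufficiently large `m`, every set of at most `m ^ c`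
integers of `m` bits each can be separated by residues modulo some prime
`p < m ^ c₀`. -/
theorem stmt13 (c : ℕ) :
    ∃ c₀ : ℕ, ∃ m₀ : ℕ, ∀ m : ℕ, m₀ ≤ m → ∀ S : Finset ℕ,
      (∀ x ∈ S, x < 2 ^ m) → S.card ≤ m ^ c →
      ∃ p : ℕ, p.Prime ∧ p < m ^ c₀ ∧
        ∀ x ∈ S, ∀ y ∈ S, x % p = y % p → x = y := by
  set K := 2 * c + 5 with hK
  refine ⟨2 * c + 4, 2 ^ (4 * K + 4), fun m hm S hbits hcard => ?_⟩
  have hm2 : 2 ≤ m := by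
    have : 2 ^ 1 ≤ 2 ^ (4 * K + 4) := Nat.pow_le_pow_right (by norm_num) (by omega)
    omega
  -- the linear-vs-log estimate
  have hl : K * (Nat.log 2 m + 1) ≤ m := by
    have hlog : 4 * K + 4 ≤ Nat.log 2 m :=
      (Nat.le_log_iff_pow_le (by norm_num) (by omega)).mpr hm
    calc K * (Nat.log 2 m + 1) ≤ 2 ^ Nat.log 2 m := fks_lin_le_pow K _ hlog
      _ ≤ m := Nat.pow_log_le_self 2 (by omega)
  by_contra hcon
  push_neg at hcon
  -- the set of primes dividing some pairwise difference
  set T : Finset ℕ := (S ×ˢ S).biUnion (fun q => (q.1 - q.2).primeFactors) with hT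
  have hTcard : T.card ≤ m ^ (2 * c + 1) := by
    have h1 : T.card ≤ (S ×ˢ S).card * m := by
      apply Finset.card_biUnion_le_card_mul
      intro q hq
      obtain ⟨hq1, hq2⟩ := Finset.mem_product.mp hq
      exact fks_omega_le (lt_of_le_of_lt (Nat.sub_le _ _) (hbits q.1 hq1))
    calc T.card ≤ (S ×ˢ S).card * m := h1
      _ = S.card * S.card * m := by rw [Finset.card_product]
      _ ≤ m ^ c * m ^ c * m := by
          exact Nat.mul_le_mul (Nat.mul_le_mul hcard hcard) le_rfl
      _ = m ^ (2 * c + 1) := by ring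
  set B := m ^ (2 * c + 3) with hB
  have hB8 : 8 ≤ B := by
    calc (8 : ℕ) = 2 ^ 3 := by norm_num
      _ ≤ m ^ 3 := Nat.pow_le_pow_left hm2 3
      _ ≤ m ^ (2 * c + 3) := Nat.pow_le_pow_right (by omega) (by omega)
  set n := B / 2 with hn
  have hn4 : 4 ≤ n := by omega
  -- every prime ≤ 2n lies in T
  have hsub : (Finset.range (2 * n + 1)).filter Nat.Prime ⊆ T := by
    intro p hp
    obtain ⟨hpr, hpp⟩ := Finset.mem_filter.mp hp
    have hplt : p < m ^ (2 * c + 4) := by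
      have h1 : p < 2 * n + 1 := Finset.mem_range.mp hpr
      have h2 : 2 * n ≤ B := Nat.mul_div_le B 2
      have h3 : B < m ^ (2 * c + 4) :=
        Nat.pow_lt_pow_right (by omega) (by omega)
      omega
    obtain ⟨x, hx, y, hy, hmod, hne⟩ := hcon p hpp hplt
    rcases Nat.lt_or_ge y x with hlt | hge
    · apply Finset.mem_biUnion.mpr ⟨(x, y), Finset.mem_product.mpr ⟨hx, hy⟩, ?_⟩
      refine Nat.mem_primeFactors.mpr ⟨hpp, ?_, by omega⟩
      exact (Nat.modEq_iff_dvd' hlt.le).mp hmod.symm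
    · have hlt : x < y := by omega
      apply Finset.mem_biUnion.mpr ⟨(y, x), Finset.mem_product.mpr ⟨hy, hx⟩, ?_⟩
      refine Nat.mem_primeFactors.mpr ⟨hpp, ?_, by omega⟩
      exact (Nat.modEq_iff_dvd' hlt.le).mp hmod
  have hPi : ((Finset.range (2 * n + 1)).filter Nat.Prime).card ≤ m ^ (2 * c + 1) :=
    le_trans (Finset.card_le_card hsub) hTcard
  -- Chebyshev bound gives a contradiction
  have hcheb := fks_cheb n hn4
  have h2n : 2 * n ≤ B := Nat.mul_div_le B 2
  have hchain : 2 ^ (B - 1) < B ^ (m ^ (2 * c + 1) + 1) := by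
    calc 2 ^ (B - 1) ≤ 2 ^ (2 * n) := Nat.pow_le_pow_right (by norm_num) (by omega)
      _ = 4 ^ n := by rw [show (4:ℕ) = 2^2 by norm_num, ← pow_mul]
      _ < (2 * n) ^ (((Finset.range (2 * n + 1)).filter Nat.Prime).card + 1) := hcheb
      _ ≤ B ^ (((Finset.range (2 * n + 1)).filter Nat.Prime).card + 1) :=
          Nat.pow_le_pow_left h2n _
      _ ≤ B ^ (m ^ (2 * c + 1) + 1) := Nat.pow_le_pow_right (by omega) (by omega)
  -- bound B^k by a power of 2
  have hBlt : B < 2 ^ ((2 * c + 3) * (Nat.log 2 m + 1)) := by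
    calc B = m ^ (2 * c + 3) := hB
      _ < (2 ^ (Nat.log 2 m + 1)) ^ (2 * c + 3) :=
          Nat.pow_lt_pow_left (Nat.lt_pow_succ_log_self (by norm_num) m) (by omega)
      _ = 2 ^ ((2 * c + 3) * (Nat.log 2 m + 1)) := by rw [← pow_mul, Nat.mul_comm]
  have hkey : B - 1 < (2 * c + 3) * (Nat.log 2 m + 1) * (m ^ (2 * c + 1) + 1) := by
    have h1 : 2 ^ (B - 1) < 2 ^ ((2 * c + 3) * (Nat.log 2 m + 1) * (m ^ (2 * c + 1) + 1)) := by
      calc 2 ^ (B - 1) < B ^ (m ^ (2 * c + 1) + 1) := hchain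
        _ ≤ (2 ^ ((2 * c + 3) * (Nat.log 2 m + 1))) ^ (m ^ (2 * c + 1) + 1) :=
            Nat.pow_le_pow_left hBlt.le _
        _ = 2 ^ ((2 * c + 3) * (Nat.log 2 m + 1) * (m ^ (2 * c + 1) + 1)) := by
            rw [← pow_mul]
    exact (Nat.pow_lt_pow_iff_right (by norm_num)).mp h1
  -- final numeric contradiction
  have hA : m ^ (2 * c + 1) + 1 ≤ m ^ (2 * c + 2) := by
    calc m ^ (2 * c + 1) + 1 ≤ 2 * m ^ (2 * c + 1) := by
          have := Nat.one_le_pow (2 * c + 1) m (by omega); omega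
      _ ≤ m * m ^ (2 * c + 1) := Nat.mul_le_mul hm2 le_rfl
      _ = m ^ (2 * c + 2) := by ring
  have hlin : (2 * c + 3) * (Nat.log 2 m + 1) ≤ m - 2 := by
    have : (2 * c + 3) * (Nat.log 2 m + 1) + 2 * (Nat.log 2 m + 1) = K * (Nat.log 2 m + 1) := by
      rw [hK]; ring
    omega
  have hfin : (2 * c + 3) * (Nat.log 2 m + 1) * (m ^ (2 * c + 1) + 1) ≤ (m - 2) * m ^ (2 * c + 2) :=
    Nat.mul_le_mul hlin hA
  have hsplit : (m - 2) * m ^ (2 * c + 2) + 2 * m ^ (2 * c + 2) = B := by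
    rw [← Nat.add_mul]
    rw [Nat.sub_add_cancel hm2, hB]
    ring
  have hApos : 1 ≤ m ^ (2 * c + 2) := Nat.one_le_pow _ _ (by omega)
  omega
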